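/- Harmonic-mean property of ranking scores: assume S(ω) ∈ {0,1} for all ω ∈ Ω, let I₁ and I₂ be importances with I₁(ω) = I₂(ω) for every ω with S(ω) = 1, and let I = (I₁ + I₂)/2 (pointwise). Then for every performance p with ∑_{ω : S(ω)=1} I₁(ω)·p(ω) > 0, the ranking scores R_{I₁}(p), R_{I₂}(p), R_I(p) are all defined and nonzero, and 1 / R_I(p) = (1/2)·(1 / R_{I₁}(p)) + (1/2)·(1 / R_{I₂}(p)). -/
import Mathlib


/-- A performance on a finite sample space: nonnegative and summing to one. -/
def IsPerformance {Ω : Type*} [Fintype Ω] (p : Ω → ℝ) : Prop :=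
  (∀ ω, 0 ≤ p ω) ∧ ∑ ω, p ω = 1

/-- An importance: nonnegative and nonzero. -/
def IsImportance {Ω : Type*} [Fintype Ω] (I : Ω → ℝ) : Prop :=
  (∀ ω, 0 ≤ I ω) ∧ ∃ ω, 0 < I ω

/-- The ranking score with importance `I` and satisfaction `S`. -/
noncomputable def rankingScore {Ω : Type*} [Fintype Ω] (I S p : Ω → ℝ) : ℝ :=
  (∑ ω, I ω * S ω * p ω) / (∑ ω, I ω * p ω)

theorem stmt10 {Ω : Type*} [Fintype Ω] [Nonempty Ω] (S I₁ I₂ : Ω → ℝ)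
    (hI₁ : IsImportance I₁) (hI₂ : IsImportance I₂)
    (hS : ∀ ω, S ω = 0 ∨ S ω = 1)
    (heq : ∀ ω, S ω = 1 → I₁ ω = I₂ ω)
    (p : Ω → ℝ) (hp : IsPerformance p)
    (hpos : 0 < ∑ ω ∈ Finset.univ.filter (fun ω => S ω = 1), I₁ ω * p ω) :
    (∑ ω, I₁ ω * p ω ≠ 0) ∧ (∑ ω, I₂ ω * p ω ≠ 0) ∧
    (∑ ω, ((I₁ ω + I₂ ω) / 2) * p ω ≠ 0) ∧
    rankingScore I₁ S p ≠ 0 ∧ rankingScore I₂ S p ≠ 0 ∧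
    rankingScore (fun ω => (I₁ ω + I₂ ω) / 2) S p ≠ 0 ∧
    1 / rankingScore (fun ω => (I₁ ω + I₂ ω) / 2) S p =
      (1 / 2) * (1 / rankingScore I₁ S p) + (1 / 2) * (1 / rankingScore I₂ S p) := by
  set N : ℝ := ∑ ω ∈ Finset.univ.filter (fun ω => S ω = 1), I₁ ω * p ω with hN
  -- numerators
  have hnum : ∀ I : Ω → ℝ, (∀ ω, S ω = 1 → I ω = I₁ ω) →
      ∑ ω, I ω * S ω * p ω = N := by
    intro I hIeq
    rw [hN, Finset.sum_filter]
    apply Finset.sum_congr rfl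
    intro ω _
    rcases hS ω with h | h
    · simp [h]
    · simp [h, hIeq ω h]
  have hnum1 : ∑ ω, I₁ ω * S ω * p ω = N := hnum I₁ (fun _ _ => rfl)
  have hnum2 : ∑ ω, I₂ ω * S ω * p ω = N := hnum I₂ (fun ω h => (heq ω h).symm)
  have hnumavg : ∑ ω, ((I₁ ω + I₂ ω) / 2) * S ω * p ω = N := by
    apply hnum
    intro ω h
    rw [heq ω h]; ring
  -- denominators
  have hden : ∀ I : Ω → ℝ, (∀ ω, 0 ≤ I ω) → (∑ ω, I ω * S ω * p ω = N) →
      0 < ∑ ω, I ω * p ω := by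
    intro I hInn hn
    calc (0:ℝ) < N := hpos
    _ = ∑ ω, I ω * S ω * p ω := hn.symm
    _ = ∑ ω ∈ Finset.univ.filter (fun ω => S ω = 1), I ω * p ω := by
        rw [Finset.sum_filter]
        apply Finset.sum_congr rfl
        intro ω _
        rcases hS ω with h | h
        · simp [h]
        · simp [h]
    _ ≤ ∑ ω, I ω * p ω := by
        apply Finset.sum_le_sum_of_subset_of_nonneg (Finset.filter_subset _ _)
        intro ω _ _
        exact mul_nonneg (hInn ω) (hp.1 ω)
  have hd1 : 0 < ∑ ω, I₁ ω * p ω := hden I₁ hI₁.1 hnum1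
  have hd2 : 0 < ∑ ω, I₂ ω * p ω := hden I₂ hI₂.1 hnum2
  have hdavg : 0 < ∑ ω, ((I₁ ω + I₂ ω) / 2) * p ω :=
    hden _ (fun ω => div_nonneg (add_nonneg (hI₁.1 ω) (hI₂.1 ω)) two_pos.le) hnumavg
  have hdavgeq : ∑ ω, ((I₁ ω + I₂ ω) / 2) * p ω
      = ((∑ ω, I₁ ω * p ω) + ∑ ω, I₂ ω * p ω) / 2 := by
    rw [← Finset.sum_add_distrib, Finset.sum_div]
    apply Finset.sum_congr rfl
    intro ω _; ring
  refine ⟨hd1.ne', hd2.ne', hdavg.ne', ?_, ?_, ?_, ?_⟩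
  · unfold rankingScore; rw [hnum1]; exact div_ne_zero hpos.ne' hd1.ne'
  · unfold rankingScore; rw [hnum2]; exact div_ne_zero hpos.ne' hd2.ne'
  · unfold rankingScore; rw [hnumavg]; exact div_ne_zero hpos.ne' hdavg.ne'
  · unfold rankingScore
    rw [hnum1, hnum2, hnumavg, one_div_div, one_div_div, one_div_div, hdavgeq]
    ring
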